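/- Let (c, w) be jointly Gaussian with Var(w) > 0 and Cov(c, w) = ρ. Write c = α + βw + e with β = ρ/Var(w), where e is Gaussian, independent of w, with mean 0. Then for any v, q ∈ ℝ with P(w ≥ q) > 0: if ρ < 0, the map q ↦ P(α + βw + e ≤ v | w ≥ q) is nondecreasing. -/

import Mathlib

open MeasureTheory ProbabilityTheory

/-- Covariance of two real random variables. -/
noncomputable def covRV {Ω : Type*} [MeasurableSpace Ω] (μ : Measure Ω) (c w : Ω → ℝ) : ℝ :=
  (∫ ω, c ω * w ω ∂μ) - (∫ ω, c ω ∂μ) * (∫ ω, w ω ∂μ)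

lemma ennreal_inv_mul_le_inv_mul {a b x y : ENNReal} (ha : a ≠ 0) (ha' : a ≠ ⊤)
    (hb : b ≠ 0) (hb' : b ≠ ⊤) (h : x * b ≤ y * a) : a⁻¹ * x ≤ b⁻¹ * y := by
  have hbb : b⁻¹ * b = 1 := ENNReal.inv_mul_cancel hb hb'
  have haa : a⁻¹ * a = 1 := ENNReal.inv_mul_cancel ha ha'
  calc a⁻¹ * x = a⁻¹ * x * (b⁻¹ * b) := by rw [hbb, mul_one]
    _ = (a⁻¹ * b⁻¹) * (x * b) := by ring
    _ ≤ (a⁻¹ * b⁻¹) * (y * a) := mul_le_mul_right h _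
    _ = b⁻¹ * y * (a⁻¹ * a) := by ring
    _ = b⁻¹ * y := by rw [haa, mul_one]

/-- Regression decomposition of a bivariate Gaussian: `c = α + β w + e` with
`β = Cov(c,w)/Var(w)` and `e` Gaussian, mean zero, independent of `w`. If
`Cov(c,w) < 0` then `q ↦ P(α + β w + e ≤ v ∣ w ≥ q)` is nondecreasing (over
thresholds with positive survival probability). -/
theorem gaussian_regression_cond_prob_mono
    {Ω : Type*} [MeasurableSpace Ω] (μ : Measure Ω) [IsProbabilityMeasure μ]
    (c w e : Ω → ℝ) (hw : Measurable w) (he : Measurable e)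
    (mw : ℝ) (vw : NNReal) (hwG : Measure.map w μ = gaussianReal mw vw)
    (ve : NNReal) (heG : Measure.map e μ = gaussianReal 0 ve)
    (hindep : IndepFun w e μ)
    (hvar : 0 < variance w μ)
    (ρ α β : ℝ) (hρ : ρ = covRV μ c w) (hβ : β = ρ / variance w μ)
    (hdecomp : ∀ ω, c ω = α + β * w ω + e ω)
    (v : ℝ) (hneg : ρ < 0) :
    ∀ q q' : ℝ, q ≤ q' → 0 < μ {ω | q ≤ w ω} → 0 < μ {ω | q' ≤ w ω} →
      (μ[|{ω | q ≤ w ω}]) {ω | α + β * w ω + e ω ≤ v}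
        ≤ (μ[|{ω | q' ≤ w ω}]) {ω | α + β * w ω + e ω ≤ v} := by
  intro q q' hqq hApos hBpos
  have hβneg : β < 0 := by
    rw [hβ]; exact div_neg_of_neg_of_pos hneg hvar
  set A : Set Ω := {ω | q ≤ w ω} with hAdef
  set B : Set Ω := {ω | q' ≤ w ω} with hBdef
  set S : Set Ω := {ω | α + β * w ω + e ω ≤ v} with hSdef
  have hmA : MeasurableSet A := hw measurableSet_Ici
  have hmB : MeasurableSet B := hw measurableSet_Ici
  have hmS : MeasurableSet S := by
    have hm : Measurable fun ω => α + β * w ω + e ω := by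
      exact ((measurable_const.add (hw.const_mul β)).add he)
    exact hm measurableSet_Iic
  have hBA : B ⊆ A := fun ω hω => le_trans hqq hω
  rw [cond_apply hmA, cond_apply hmB]
  -- the threshold event for e
  set T : Set Ω := e ⁻¹' Set.Iic (v - α - β * q') with hTdef
  set t : ENNReal := μ T with htdef
  -- independence facts
  have hAB : A \ B = w ⁻¹' Set.Ico q q' := by
    ext ω; simp [hAdef, hBdef, Set.mem_Ico, not_le, and_comm]
  have hind := (indepFun_iff_measure_inter_preimage_eq_mul.mp hindep)
  have hind1 : μ ((A \ B) ∩ T) = μ (A \ B) * t := by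
    rw [hAB, hTdef]
    exact hind _ _ measurableSet_Ico measurableSet_Iic
  have hind2 : μ (B ∩ T) = μ B * t := by
    have : B = w ⁻¹' Set.Ici q' := rfl
    rw [this, hTdef]
    exact hind _ _ measurableSet_Ici measurableSet_Iic
  -- key inclusions
  have hsub1 : (A \ B) ∩ S ⊆ (A \ B) ∩ T := by
    rintro ω ⟨hωAB, hωS⟩
    refine ⟨hωAB, ?_⟩
    have hwlt : w ω ≤ q' := le_of_lt (not_le.mp hωAB.2)
    have : β * q' ≤ β * w ω := mul_le_mul_of_nonpos_left hwlt (le_of_lt hβneg)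
    simp only [hTdef, Set.mem_preimage, Set.mem_Iic]
    have := hωS
    simp only [hSdef, Set.mem_setOf_eq] at this
    linarith
  have hsub2 : B ∩ T ⊆ B ∩ S := by
    rintro ω ⟨hωB, hωT⟩
    refine ⟨hωB, ?_⟩
    have hq'w : q' ≤ w ω := hωB
    have : β * w ω ≤ β * q' := mul_le_mul_of_nonpos_left hq'w (le_of_lt hβneg)
    simp only [hTdef, Set.mem_preimage, Set.mem_Iic] at hωT
    simp only [hSdef, Set.mem_setOf_eq]
    linarith
  have h1 : μ ((A \ B) ∩ S) ≤ μ (A \ B) * t := hind1 ▸ measure_mono hsub1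
  have h2 : μ B * t ≤ μ (B ∩ S) := hind2 ▸ measure_mono hsub2
  -- decompose
  have hdecA : μ (A ∩ S) = μ (B ∩ S) + μ ((A \ B) ∩ S) := by
    have hdisj : Disjoint (B ∩ S) ((A \ B) ∩ S) := by
      apply Set.disjoint_left.mpr
      rintro ω ⟨hωB, _⟩ ⟨hωAB, _⟩
      exact hωAB.2 hωB
    rw [← measure_union hdisj ((hmA.diff hmB).inter hmS)]
    congr 1
    ext ω
    constructor
    · rintro ⟨hωA, hωS⟩
      by_cases hωB : ω ∈ B
      · exact Or.inl ⟨hωB, hωS⟩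
      · exact Or.inr ⟨⟨hωA, hωB⟩, hωS⟩
    · rintro (⟨hωB, hωS⟩ | ⟨hωAB, hωS⟩)
      · exact ⟨hBA hωB, hωS⟩
      · exact ⟨hωAB.1, hωS⟩
  have hdecA' : μ A = μ B + μ (A \ B) := by
    rw [← measure_union (Set.disjoint_sdiff_right) (hmA.diff hmB)]
    congr 1
    rw [Set.union_diff_cancel hBA]
  -- cross-multiplied inequality
  apply ennreal_inv_mul_le_inv_mul (ne_of_gt hApos) (measure_ne_top μ A)
    (ne_of_gt hBpos) (measure_ne_top μ B)
  rw [hdecA, hdecA', add_mul, mul_add]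
  apply add_le_add_right
  calc μ ((A \ B) ∩ S) * μ B ≤ (μ (A \ B) * t) * μ B := by
        exact mul_le_mul_left h1 _
    _ = (μ B * t) * μ (A \ B) := by ring
    _ ≤ μ (B ∩ S) * μ (A \ B) := mul_le_mul_left h2 _
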